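/- Let R > 0, ν > 1, 0 < l ≤ πR, and set α := sin(l/(2R)) and h₊(x) := (1/ν)( −sin²[x/(2R)] + cos[x/(2R)]√(ν² − sin²[x/(2R)]) ). Then ∫₀^l [ (h₊(σ + 2πR − l) − h₊(2πR)) + (h₊(0) − h₊(σ)) ] dσ = 2l − 2H(α,ν), where H(α,ν) := R( (α/ν)√(ν² − α²) + ν arcsin(α/ν) ). (Note h₊(0) = 1 and h₊(2πR) = −1 for ν > 1.) -/

import Mathlib

open Real intervalIntegral

/-- `h₊(x) = (1/ν)(−sin²[x/(2R)] + cos[x/(2R)] √(ν² − sin²[x/(2R)]))`. -/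
noncomputable def hPlus (R ν x : ℝ) : ℝ :=
  (1 / ν) * (-(sin (x / (2 * R))) ^ 2
    + cos (x / (2 * R)) * Real.sqrt (ν ^ 2 - (sin (x / (2 * R))) ^ 2))

/-- `H(α,ν) = R((α/ν)√(ν² − α²) + ν arcsin(α/ν))`. -/
noncomputable def Hfun (R α ν : ℝ) : ℝ :=
  R * ((α / ν) * Real.sqrt (ν ^ 2 - α ^ 2) + ν * arcsin (α / ν))

/-- Antiderivative of `hPlus`. -/
noncomputable def Kfun (R ν x : ℝ) : ℝ :=
  Hfun R (sin (x / (2 * R))) ν - (1 / (2 * ν)) * (x - R * sin (x / R))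

lemma hasDerivAt_Kfun (R ν : ℝ) (hR : 0 < R) (hν : 1 < ν) (x : ℝ) :
    HasDerivAt (Kfun R ν) (hPlus R ν x) x := by
  have hν0 : 0 < ν := lt_trans one_pos hν
  set s := sin (x / (2 * R)) with hs
  set c := cos (x / (2 * R)) with hc
  have hs2 : s ^ 2 ≤ 1 := sin_sq_le_one _
  have hq : 0 < ν ^ 2 - s ^ 2 := by nlinarith
  have hqs : 0 < Real.sqrt (ν ^ 2 - s ^ 2) := Real.sqrt_pos.mpr hq
  have hsq : Real.sqrt (ν ^ 2 - s ^ 2) ^ 2 = ν ^ 2 - s ^ 2 := Real.sq_sqrt hq.le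
  have hu : HasDerivAt (fun x : ℝ => x / (2 * R)) (1 / (2 * R)) x := by
    simpa using (hasDerivAt_id x).div_const (2 * R)
  have hsin : HasDerivAt (fun x : ℝ => sin (x / (2 * R))) (c * (1 / (2 * R))) x :=
    (Real.hasDerivAt_sin _).comp x hu
  have hsqrt := (Real.hasDerivAt_sqrt hq.ne').comp x ((hsin.pow 2).const_sub (ν ^ 2))
  have hdiv : HasDerivAt (fun x : ℝ => sin (x / (2 * R)) / ν) (c * (1 / (2 * R)) / ν) x :=
    hsin.div_const ν
  have habs : |s / ν| < 1 := by
    rw [abs_div, abs_of_pos hν0, div_lt_one hν0]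
    exact lt_of_le_of_lt (abs_le.mpr ⟨neg_one_le_sin _, sin_le_one _⟩) hν
  have harcsin : HasDerivAt (fun x : ℝ => arcsin (sin (x / (2 * R)) / ν))
      (1 / Real.sqrt (1 - (s / ν) ^ 2) * (c * (1 / (2 * R)) / ν)) x :=
    by
      have h0 := Real.hasDerivAt_arcsin (x := s / ν) (ne_of_gt (abs_lt.mp habs).1)
        (ne_of_lt (abs_lt.mp habs).2)
      have h00 := h0.comp x hdiv
      exact h00
  have hH := ((hdiv.mul hsqrt).add (harcsin.const_mul ν)).const_mul R
  have hsinR : HasDerivAt (fun x : ℝ => sin (x / R)) (cos (x / R) * (1 / R)) x :=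
    (Real.hasDerivAt_sin _).comp x (by simpa using (hasDerivAt_id x).div_const R)
  have hlin : HasDerivAt (fun x : ℝ => x - R * sin (x / R))
      (1 - R * (cos (x / R) * (1 / R))) x :=
    (hasDerivAt_id x).sub ((hsinR).const_mul R)
  have hK := hH.sub (hlin.const_mul (1 / (2 * ν)))
  refine hK.congr_deriv ?_
  symm
  have hcosR : cos (x / R) = 1 - 2 * s ^ 2 := by
    have h2 : x / R = 2 * (x / (2 * R)) := by field_simp
    rw [h2, cos_two_mul]
    have := sin_sq_add_cos_sq (x / (2 * R))
    rw [← hs, ← hc] at this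
    nlinarith
  have hsqrt1 : Real.sqrt (1 - (s / ν) ^ 2) = Real.sqrt (ν ^ 2 - s ^ 2) / ν := by
    have h1 : 1 - (s / ν) ^ 2 = (ν ^ 2 - s ^ 2) / ν ^ 2 := by field_simp
    rw [h1, Real.sqrt_div hq.le, Real.sqrt_sq hν0.le]
  rw [hPlus, hcosR, hsqrt1]
  simp only [Function.comp, Pi.pow_apply, ← hs, ← hc]
  set q := Real.sqrt (ν ^ 2 - s ^ 2) with hqdef
  field_simp
  linear_combination (2 * c) * hsq

lemma hPlus_zero (R ν : ℝ) (hν : 1 < ν) : hPlus R ν 0 = 1 := by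
  have hν0 : 0 < ν := lt_trans one_pos hν
  simp [hPlus, Real.sqrt_sq hν0.le]
  field_simp

lemma hPlus_two_pi (R ν : ℝ) (hR : 0 < R) (hν : 1 < ν) : hPlus R ν (2 * π * R) = -1 := by
  have hν0 : 0 < ν := lt_trans one_pos hν
  have h : (2 * π * R) / (2 * R) = π := by field_simp
  rw [hPlus, h]
  simp [Real.sqrt_sq hν0.le]
  field_simp

lemma hPlus_continuous (R ν : ℝ) : Continuous (hPlus R ν) := by
  unfold hPlus
  fun_prop

theorem integral_h_reflection (R ν l : ℝ) (hR : 0 < R) (hν : 1 < ν)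
    (hl0 : 0 < l) (hl : l ≤ π * R) :
    ∫ σ in (0 : ℝ)..l,
        ((hPlus R ν (σ + 2 * π * R - l) - hPlus R ν (2 * π * R))
          + (hPlus R ν 0 - hPlus R ν σ)) =
      2 * l - 2 * Hfun R (sin (l / (2 * R))) ν := by
  have hν0 : 0 < ν := lt_trans one_pos hν
  have hR0 : R ≠ 0 := hR.ne'
  have hF : ∀ σ ∈ Set.uIcc (0 : ℝ) l, HasDerivAt
      (fun σ => 2 * σ + (Kfun R ν (σ + 2 * π * R - l) - Kfun R ν σ))
      ((hPlus R ν (σ + 2 * π * R - l) - hPlus R ν (2 * π * R))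
        + (hPlus R ν 0 - hPlus R ν σ)) σ := by
    intro σ _
    have h1 : HasDerivAt (fun σ : ℝ => σ + 2 * π * R - l) 1 σ := by
      simpa using ((hasDerivAt_id σ).add_const (2 * π * R)).sub_const l
    have h2 : HasDerivAt (fun σ : ℝ => Kfun R ν (σ + 2 * π * R - l))
        (hPlus R ν (σ + 2 * π * R - l)) σ := by
      simpa [Function.comp_def] using (hasDerivAt_Kfun R ν hR hν (σ + 2 * π * R - l)).comp σ h1
    have h3 := hasDerivAt_Kfun R ν hR hν σ
    have h4 := ((hasDerivAt_id σ).const_mul 2).add (h2.sub h3)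
    rw [hPlus_zero R ν hν, hPlus_two_pi R ν hR hν]
    refine h4.congr_deriv ?_
    ring
  have hint : IntervalIntegrable
      (fun σ => (hPlus R ν (σ + 2 * π * R - l) - hPlus R ν (2 * π * R))
        + (hPlus R ν 0 - hPlus R ν σ)) MeasureTheory.volume 0 l := by
    apply Continuous.intervalIntegrable
    have hc := hPlus_continuous R ν
    fun_prop
  rw [intervalIntegral.integral_eq_sub_of_hasDerivAt hF hint]
  have e1 : l + 2 * π * R - l = 2 * π * R := by ring
  have e2 : (0 : ℝ) + 2 * π * R - l = 2 * π * R - l := by ring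
  simp only [e1, e2]
  have hK0 : Kfun R ν 0 = 0 := by simp [Kfun, Hfun]
  have hK2π : Kfun R ν (2 * π * R) = -(π * R) / ν := by
    have ha : (2 * π * R) / (2 * R) = π := by field_simp
    have hb : (2 * π * R) / R = 2 * π := by field_simp
    rw [Kfun, ha, hb]
    simp [Hfun]
    field_simp
  have hK2πl : Kfun R ν (2 * π * R - l) =
      Hfun R (sin (l / (2 * R))) ν - (1 / (2 * ν)) * (2 * π * R - l + R * sin (l / R)) := by
    have ha : (2 * π * R - l) / (2 * R) = π - l / (2 * R) := by field_simp
    have hb : (2 * π * R - l) / R = -(l / R) + 2 * π := by field_simp; ring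
    rw [Kfun, ha, hb, Real.sin_pi_sub, Real.sin_add_two_pi, Real.sin_neg]
    ring
  rw [hK0, hK2π, hK2πl, Kfun]
  field_simp
  ring
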